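/- Let X, Y be real normed spaces, T : X → Y bounded linear, q > 1 with conjugate q*, S(y) := (1/q)‖y‖^q, S*(p) := (1/q*)‖p‖^{q*}, α > 0, g ∈ Y, and R : X → ℝ convex. Assume: f† ∈ X and p̄ ∈ Y* with p̄ ∘ T ∈ ∂R(f†); f₁ ∈ X minimizes h ↦ (1/α)S(Th − g) + R(h); p̂ ∈ Y* satisfies p̂ ∘ T ∈ ∂R(f₁) and −α p̂ ∈ ∂S(T f₁ − g); f₂ ∈ X minimizes h ↦ (1/α)S(Th − g) + D_R^{p̂∘T}(h, f₁); p₂ ∈ Y* satisfies −α p₂ ∈ ∂S(T f₂ − g); G ∈ Y satisfies S*(−α p̄) + (p + α p̄)(G) ≤ S*(p) for all p ∈ Y* (i.e. G ∈ ∂S*(−α p̄)); and c* > 0 satisfies S*(p) − S*(−α p̄) − (p + α p̄)(G) ≥ (c*/q*)‖p + α p̄‖^{q*} for all p ∈ Y*. Then D_R^{p̄∘T}(f₂, f†) ≤ (2/α) ( S(T f† − g) + (1/c*) [ S*(−α p̂) − S*(−α p̄) − (−α p̂ + α p̄)(G) ] ). -/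

import Mathlib

/-- Error bound for the second Bregman iterate in terms of the dual
Bregman distance (Lemma `starting_lemma` of the paper):
`D_R^{p̄∘T}(f₂, f†) ≤ (2/α)( S(Tf†−g) + (1/c*) D_{S*}^G(−αp̂, −αp̄) )`. -/

private lemma stmt8_aux (α cstar s2 sd A x1 x2 y1 y2 Dst L : ℝ)
    (hα : 0 < α) (hc : 0 < cstar)
    (e1 : L ≤ 1 / α * (sd - s2) + (x1 - x2))
    (hY1 : α * x1 - α * y1 ≤ A + s2)
    (hY2 : α * y2 - α * x2 ≤ A + sd)
    (hAle : A ≤ 1 / cstar * Dst) :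
    L - (y1 - y2) ≤ 2 / α * (sd + 1 / cstar * Dst) := by
  have e1' : α * L ≤ (sd - s2) + (α * x1 - α * x2) := by
    have h := mul_le_mul_of_nonneg_left e1 hα.le
    have heq : α * (1 / α * (sd - s2) + (x1 - x2)) = (sd - s2) + (α * x1 - α * x2) := by
      field_simp
    linarith
  have h5 : α * L - α * y1 + α * y2 ≤ 2 * sd + 2 * A := by linarith
  have h6 : L - (y1 - y2) ≤ (2 * sd + 2 * A) / α := by
    rw [le_div_iff₀ hα]
    have hexp : (L - (y1 - y2)) * α = α * L - α * y1 + α * y2 := by ring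
    rw [hexp]; linarith
  have h7 : (2 * sd + 2 * A) / α = 2 / α * (sd + A) := by ring
  have h8 : 2 / α * (sd + A) ≤ 2 / α * (sd + 1 / cstar * Dst) := by
    apply mul_le_mul_of_nonneg_left _ (by positivity)
    linarith
  linarith

theorem stmt_8 {X Y : Type*} [NormedAddCommGroup X] [NormedSpace ℝ X]
    [NormedAddCommGroup Y] [NormedSpace ℝ Y]
    (T : X →L[ℝ] Y) (q qs : ℝ) (hq : 1 < q) (hqs : 1 / q + 1 / qs = 1)
    (α : ℝ) (hα : 0 < α) (g : Y)
    (R : X → ℝ) (hR : ConvexOn ℝ Set.univ R)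
    -- source condition p̄ ∘ T ∈ ∂R(f†)
    (fdag : X) (pbar : Y →L[ℝ] ℝ)
    (hpbar : ∀ h : X, R fdag + (pbar.comp T) (h - fdag) ≤ R h)
    -- f₁ minimizes the Tikhonov functional
    (f₁ : X)
    (hf₁ : ∀ h : X, 1 / α * (1 / q * ‖T f₁ - g‖ ^ q) + R f₁
      ≤ 1 / α * (1 / q * ‖T h - g‖ ^ q) + R h)
    -- p̂ ∘ T ∈ ∂R(f₁) and −α p̂ ∈ ∂S(T f₁ − g)
    (phat : Y →L[ℝ] ℝ)
    (hphat₁ : ∀ h : X, R f₁ + (phat.comp T) (h - f₁) ≤ R h)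
    (hphat₂ : ∀ y : Y, 1 / q * ‖T f₁ - g‖ ^ q + ((-α) • phat) (y - (T f₁ - g))
      ≤ 1 / q * ‖y‖ ^ q)
    -- f₂ minimizes the Bregman iterated Tikhonov functional
    (f₂ : X)
    (hf₂ : ∀ h : X,
      1 / α * (1 / q * ‖T f₂ - g‖ ^ q) + (R f₂ - R f₁ - (phat.comp T) (f₂ - f₁))
        ≤ 1 / α * (1 / q * ‖T h - g‖ ^ q) + (R h - R f₁ - (phat.comp T) (h - f₁)))
    -- −α p₂ ∈ ∂S(T f₂ − g)
    (p₂ : Y →L[ℝ] ℝ)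
    (hp₂ : ∀ y : Y, 1 / q * ‖T f₂ - g‖ ^ q + ((-α) • p₂) (y - (T f₂ - g))
      ≤ 1 / q * ‖y‖ ^ q)
    -- G ∈ ∂S*(−α p̄)
    (G : Y)
    (hG : ∀ p : Y →L[ℝ] ℝ,
      1 / qs * ‖(-α) • pbar‖ ^ qs + (p + α • pbar) G ≤ 1 / qs * ‖p‖ ^ qs)
    -- q*-convexity estimate for S*
    (cstar : ℝ) (hcstar : 0 < cstar)
    (hXR : ∀ p : Y →L[ℝ] ℝ,
      1 / qs * ‖p‖ ^ qs - 1 / qs * ‖(-α) • pbar‖ ^ qs - (p + α • pbar) G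
        ≥ cstar / qs * ‖p + α • pbar‖ ^ qs) :
    R f₂ - R fdag - (pbar.comp T) (f₂ - fdag)
      ≤ 2 / α * (1 / q * ‖T fdag - g‖ ^ q
        + 1 / cstar * (1 / qs * ‖(-α) • phat‖ ^ qs - 1 / qs * ‖(-α) • pbar‖ ^ qs
          - ((-α) • phat + α • pbar) G)) := by
  have hq0 : (0:ℝ) < q := by linarith
  have h1q : (0:ℝ) < 1 / q := by positivity
  have h2 : 1 / qs = 1 - 1 / q := by linarith
  have hqlt : 1 / q < 1 := (div_lt_one hq0).mpr hq
  have h3 : (0:ℝ) < 1 / qs := by rw [h2]; linarith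
  have hqs0 : (0:ℝ) < qs := one_div_pos.mp h3
  have h4 : 1 / qs < 1 := by rw [h2]; linarith
  have hqs1 : (1:ℝ) < qs := (div_lt_one hqs0).mp h4
  have hconj : qs.HolderConjugate q :=
    Real.holderConjugate_iff.mpr ⟨hqs1, by rw [inv_eq_one_div, inv_eq_one_div]; linarith⟩
  have young : ∀ y : Y, α * phat y - α * pbar y
      ≤ 1 / qs * ‖α • phat - α • pbar‖ ^ qs + 1 / q * ‖y‖ ^ q := by
    intro y
    have hle : (α • phat - α • pbar) y ≤ ‖α • phat - α • pbar‖ * ‖y‖ :=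
      le_trans (le_abs_self _) ((α • phat - α • pbar).le_opNorm y)
    have happ : (α • phat - α • pbar) y = α * phat y - α * pbar y := by
      simp [smul_eq_mul]
    rw [happ] at hle
    have hy := Real.young_inequality_of_nonneg
      (norm_nonneg (α • phat - α • pbar)) (norm_nonneg y) hconj
    have hr1 : ‖α • phat - α • pbar‖ ^ qs / qs = 1 / qs * ‖α • phat - α • pbar‖ ^ qs := by
      ring
    have hr2 : ‖y‖ ^ q / q = 1 / q * ‖y‖ ^ q := by ring
    linarith
  have hY1 : α * phat (T f₂ - g) - α * pbar (T f₂ - g)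
      ≤ 1 / qs * ‖α • phat - α • pbar‖ ^ qs + 1 / q * ‖T f₂ - g‖ ^ q :=
    young (T f₂ - g)
  have hY2 : α * pbar (T fdag - g) - α * phat (T fdag - g)
      ≤ 1 / qs * ‖α • phat - α • pbar‖ ^ qs + 1 / q * ‖T fdag - g‖ ^ q := by
    have h := young (-(T fdag - g))
    simp only [map_neg, norm_neg] at h
    linarith
  have hsub : (phat.comp T) (f₂ - f₁) - (phat.comp T) (fdag - f₁)
      = phat (T f₂ - g) - phat (T fdag - g) := by
    simp only [ContinuousLinearMap.comp_apply, map_sub]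
    ring
  have e1 : R f₂ - R fdag ≤ 1 / α * (1 / q * ‖T fdag - g‖ ^ q - 1 / q * ‖T f₂ - g‖ ^ q)
      + (phat (T f₂ - g) - phat (T fdag - g)) := by
    have h := hf₂ fdag
    linarith
  have e2 : (pbar.comp T) (f₂ - fdag) = pbar (T f₂ - g) - pbar (T fdag - g) := by
    simp only [ContinuousLinearMap.comp_apply, map_sub]
    ring
  have hXRp := hXR ((-α) • phat)
  have hneg : (-α) • phat + α • pbar = -(α • phat - α • pbar) := by
    ext y; simp; ring
  rw [hneg, norm_neg] at hXRp
  have hAle : 1 / qs * ‖α • phat - α • pbar‖ ^ qs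
      ≤ 1 / cstar * (1 / qs * ‖(-α) • phat‖ ^ qs - 1 / qs * ‖(-α) • pbar‖ ^ qs
        - ((-α) • phat + α • pbar) G) := by
    rw [hneg]
    have h := mul_le_mul_of_nonneg_left hXRp.le (one_div_pos.mpr hcstar).le
    have heq : 1 / cstar * (cstar / qs * ‖α • phat - α • pbar‖ ^ qs)
        = 1 / qs * ‖α • phat - α • pbar‖ ^ qs := by field_simp
    linarith
  rw [e2]
  exact stmt8_aux α cstar (1 / q * ‖T f₂ - g‖ ^ q) (1 / q * ‖T fdag - g‖ ^ q)
    (1 / qs * ‖α • phat - α • pbar‖ ^ qs)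
    (phat (T f₂ - g)) (phat (T fdag - g)) (pbar (T f₂ - g)) (pbar (T fdag - g))
    (1 / qs * ‖(-α) • phat‖ ^ qs - 1 / qs * ‖(-α) • pbar‖ ^ qs
      - ((-α) • phat + α • pbar) G)
    (R f₂ - R fdag) hα hcstar e1 hY1 hY2 hAle
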